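/- If V_1, ..., V_n ⊆ V and V'_1, ..., V'_n ⊆ V' are two collections of subspaces each generating a distributive lattice, then the collection V_1 ⊗ V'_1, ..., V_n ⊗ V'_n of subspaces of V ⊗ V' generates a distributive lattice. -/

import Mathlib

open TensorProduct

/-- Membership in the sublattice generated by a set of elements of a lattice. -/
inductive MemLatGen {α : Type*} [Lattice α] (S : Set α) : α → Prop
  | base {a : α} : a ∈ S → MemLatGen S a
  | sup {a b : α} : MemLatGen S a → MemLatGen S b → MemLatGen S (a ⊔ b)
  | inf {a b : α} : MemLatGen S a → MemLatGen S b → MemLatGen S (a ⊓ b)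

/-- A family of elements of a lattice generates a distributive lattice. -/
def IsDistribFamily {α : Type*} [Lattice α] (S : Set α) : Prop :=
  ∀ a b c : α, MemLatGen S a → MemLatGen S b → MemLatGen S c →
    a ⊓ (b ⊔ c) = (a ⊓ b) ⊔ (a ⊓ c)

/-- For subspaces `p ⊆ V`, `q ⊆ V'`, the subspace `p ⊗ q ⊆ V ⊗ V'`, defined as the image
of the canonical map `p ⊗ q → V ⊗ V'`. -/
noncomputable def tensorSub {k V W : Type*} [Field k] [AddCommGroup V] [Module k V]
    [AddCommGroup W] [Module k W] (p : Submodule k V) (q : Submodule k W) :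
    Submodule k (V ⊗[k] W) :=
  LinearMap.range (TensorProduct.map p.subtype q.subtype)


open Set Submodule

section Helpers

variable {k V W : Type*} [Field k] [AddCommGroup V] [Module k V]
  [AddCommGroup W] [Module k W] {ι κ : Type*}

lemma spanImage_sup (b : Module.Basis ι k V) (A B : Set ι) :
    span k (b '' A) ⊔ span k (b '' B) = span k (b '' (A ∪ B)) := by
  rw [Set.image_union, Submodule.span_union]

lemma spanImage_inf (b : Module.Basis ι k V) (A B : Set ι) :
    span k (b '' A) ⊓ span k (b '' B) = span k (b '' (A ∩ B)) := by
  ext x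
  simp only [Submodule.mem_inf, Module.Basis.mem_span_image, Set.subset_inter_iff]

lemma distrib_of_spans (b : Module.Basis ι k V) (S : Set (Submodule k V))
    (h : ∀ X ∈ S, ∃ A : Set ι, X = span k (b '' A)) : IsDistribFamily S := by
  have key : ∀ X, MemLatGen S X → ∃ A : Set ι, X = span k (b '' A) := by
    intro X hX
    induction hX with
    | base hm => exact h _ hm
    | sup ha hb iha ihb =>
        obtain ⟨A, rfl⟩ := iha; obtain ⟨B, rfl⟩ := ihb
        exact ⟨A ∪ B, spanImage_sup b A B⟩
    | inf ha hb iha ihb =>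
        obtain ⟨A, rfl⟩ := iha; obtain ⟨B, rfl⟩ := ihb
        exact ⟨A ∩ B, spanImage_inf b A B⟩
  intro x y z hx hy hz
  obtain ⟨A, rfl⟩ := key _ hx
  obtain ⟨B, rfl⟩ := key _ hy
  obtain ⟨C, rfl⟩ := key _ hz
  rw [spanImage_sup, spanImage_inf, spanImage_inf, spanImage_inf, spanImage_sup,
    Set.inter_union_distrib_left]

lemma tensorSub_span (b : Module.Basis ι k V) (c : Module.Basis κ k W) (A : Set ι) (B : Set κ) :
    tensorSub (span k (b '' A)) (span k (c '' B)) =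
      span k ((b.tensorProduct c) '' (A ×ˢ B)) := by
  have h1 : tensorSub (span k (b '' A)) (span k (c '' B)) =
      span k (Set.image2 (· ⊗ₜ[k] ·) ((span k (b '' A) : Submodule k V) : Set V)
        ((span k (c '' B) : Submodule k W) : Set W)) :=
    (TensorProduct.range_mapIncl _ _).trans (Submodule.map₂_eq_span_image2 _ _ _)
  have h2 : span k (Set.image2 (· ⊗ₜ[k] ·) ((span k (b '' A) : Submodule k V) : Set V)
      ((span k (c '' B) : Submodule k W) : Set W)) =
      span k (Set.image2 (· ⊗ₜ[k] ·) (⇑b '' A) (⇑c '' B)) :=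
    (Submodule.map₂_eq_span_image2 (TensorProduct.mk k V W) _ _).symm.trans
      (Submodule.map₂_span_span _ _ _ _)
  rw [h1, h2]
  congr 1
  rw [Set.image2_image_left, Set.image2_image_right]
  ext t
  simp only [Set.mem_image2, Set.mem_image, Set.mem_prod, Prod.exists,
    Module.Basis.tensorProduct_apply]
  constructor
  · rintro ⟨i, hi, j, hj, rfl⟩; exact ⟨i, j, ⟨hi, hj⟩, rfl⟩
  · rintro ⟨i, j, ⟨hi, hj⟩, rfl⟩; exact ⟨i, hi, j, hj, rfl⟩

end Helpers

section Adapted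
variable {k : Type*} [Field k]

lemma memLatGen_finset_inf {V : Type*} [AddCommGroup V] [Module k V] {n : ℕ}
    (Vs : Fin n → Submodule k V) {F : Finset (Fin n)} (hF : F.Nonempty) :
    MemLatGen (Set.range Vs) (F.inf Vs) := by
  induction F using Finset.cons_induction with
  | empty => exact absurd hF (by simp)
  | cons a F ha IH =>
      rw [Finset.inf_cons]
      rcases F.eq_empty_or_nonempty with rfl | hne
      · rw [Finset.inf_empty, inf_top_eq]; exact .base ⟨a, rfl⟩
      · exact MemLatGen.inf (.base ⟨a, rfl⟩) (IH hne)

lemma exists_adapted_aux (d : ℕ) :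
    ∀ {V : Type*} [AddCommGroup V] [Module k V] [FiniteDimensional k V],
      Module.finrank k V ≤ d → ∀ (n : ℕ) (Vs : Fin n → Submodule k V),
      IsDistribFamily (Set.range Vs) →
      ∃ (ι : Type) (b : Module.Basis ι k V) (A : Fin n → Set ι),
        ∀ i, Vs i = span k (⇑b '' A i) := by
  induction d with
  | zero =>
      intro V _ _ _ hr n Vs hV
      have hsub : Subsingleton V := by
        rw [← Module.finrank_zero_iff (R := k)]; omega
      refine ⟨Empty, Module.Basis.empty V, fun _ => ∅, fun i => ?_⟩
      haveI : Subsingleton (Vs i) := by infer_instance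
      rw [Submodule.eq_bot_of_subsingleton (p := Vs i)]
      rw [Set.image_empty, Submodule.span_empty]
  | succ d IH =>
      intro V _ _ _ hr n Vs hV
      classical
      by_cases hall : ∀ i, Vs i = ⊥
      · refine ⟨Fin (Module.finrank k V), Module.finBasis k V, fun _ => ∅, fun i => ?_⟩
        rw [hall i, Set.image_empty, Submodule.span_empty]
      push_neg at hall
      obtain ⟨i₀, hi₀⟩ := hall
      set S := Set.range Vs with hS
      have hex : ∃ r, ∃ X : Submodule k V, MemLatGen S X ∧ X ≠ ⊥ ∧ Module.finrank k X = r :=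
        ⟨_, Vs i₀, .base ⟨i₀, rfl⟩, hi₀, rfl⟩
      obtain ⟨U, hUgen, hUne, hUrank⟩ := Nat.find_spec hex
      have hUmin : ∀ X : Submodule k V, MemLatGen S X → X ⊓ U = ⊥ ∨ U ≤ X := by
        intro X hX
        by_cases h : X ⊓ U = ⊥
        · exact Or.inl h
        right
        have hmem : MemLatGen S (X ⊓ U) := .inf hX hUgen
        have hrank : Nat.find hex ≤ Module.finrank k (X ⊓ U : Submodule k V) :=
          Nat.find_min' hex ⟨X ⊓ U, hmem, h, rfl⟩
        have heq : X ⊓ U = U :=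
          Submodule.eq_of_le_of_finrank_le inf_le_right (hUrank ▸ hrank)
        exact heq ▸ inf_le_left
      set π := U.mkQ with hπ
      have hcomapinj : Function.Injective (Submodule.comap π) :=
        Submodule.comap_injective_of_surjective (Submodule.mkQ_surjective U)
      have hsupinf : ∀ X Y : Submodule k V, MemLatGen S X → MemLatGen S Y →
          (X ⊔ U) ⊓ (Y ⊔ U) = X ⊓ Y ⊔ U := by
        intro X Y hX hY
        have h1 := hV (X ⊔ U) Y U (.sup hX hUgen) hY hUgen
        have h2 := hV Y X U hY hX hUgen
        rw [h1]
        have h3 : (X ⊔ U) ⊓ U = U := inf_eq_right.2 le_sup_right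
        have h4 : (X ⊔ U) ⊓ Y = X ⊓ Y ⊔ Y ⊓ U := by
          rw [inf_comm, h2, inf_comm Y X]
        rw [h3, h4, sup_assoc]
        congr 1
        exact sup_eq_right.2 inf_le_right
      have hmapinf : ∀ X Y : Submodule k V, MemLatGen S X → MemLatGen S Y →
          Submodule.map π (X ⊓ Y) = Submodule.map π X ⊓ Submodule.map π Y := by
        intro X Y hX hY
        apply hcomapinj
        rw [Submodule.comap_inf, Submodule.comap_map_eq, Submodule.comap_map_eq,
          Submodule.comap_map_eq, hπ, Submodule.ker_mkQ, hsupinf X Y hX hY]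
      set Vs' : Fin n → Submodule k (V ⧸ U) := fun i => Submodule.map π (Vs i) with hVs'
      have hlift : ∀ Z, MemLatGen (Set.range Vs') Z →
          ∃ X, MemLatGen S X ∧ Z = Submodule.map π X := by
        intro Z hZ
        induction hZ with
        | base hm => obtain ⟨i, rfl⟩ := hm; exact ⟨Vs i, .base ⟨i, rfl⟩, rfl⟩
        | sup ha hb iha ihb =>
            obtain ⟨X, hX, rfl⟩ := iha; obtain ⟨Y, hY, rfl⟩ := ihb
            exact ⟨X ⊔ Y, .sup hX hY, (Submodule.map_sup X Y π).symm⟩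
        | inf ha hb iha ihb =>
            obtain ⟨X, hX, rfl⟩ := iha; obtain ⟨Y, hY, rfl⟩ := ihb
            exact ⟨X ⊓ Y, .inf hX hY, (hmapinf X Y hX hY).symm⟩
      have hV' : IsDistribFamily (Set.range Vs') := by
        intro a b c ha hb hc
        obtain ⟨X, hX, rfl⟩ := hlift a ha
        obtain ⟨Y, hY, rfl⟩ := hlift b hb
        obtain ⟨Z, hZ, rfl⟩ := hlift c hc
        rw [← Submodule.map_sup, ← hmapinf X (Y ⊔ Z) hX (.sup hY hZ),
          hV X Y Z hX hY hZ, Submodule.map_sup, hmapinf X Y hX hY, hmapinf X Z hX hZ]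
      have hfr : Module.finrank k (V ⧸ U) ≤ d := by
        have h1 := Submodule.finrank_quotient_add_finrank U
        have h2 : Module.finrank k U ≠ 0 := fun h0 =>
          hUne (Submodule.finrank_eq_zero.1 h0)
        omega
      obtain ⟨ι', b', A', hA'⟩ := IH hfr n Vs' hV'
      have hdich : ∀ i, Vs i ⊓ U = ⊥ ∨ U ≤ Vs i := fun i => hUmin (Vs i) (.base ⟨i, rfl⟩)
      have hmapFinf : ∀ F : Finset (Fin n), Submodule.map π (F.inf Vs) =
          F.inf (fun i => Submodule.map π (Vs i)) := by
        intro F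
        induction F using Finset.cons_induction with
        | empty => simp [hπ, Submodule.map_top, Submodule.range_mkQ]
        | cons a F ha IHF =>
            rw [Finset.inf_cons, Finset.inf_cons]
            rcases F.eq_empty_or_nonempty with rfl | hne
            · simp [hπ, Submodule.map_top, Submodule.range_mkQ]
            · rw [hmapinf (Vs a) (F.inf Vs) (.base ⟨a, rfl⟩) (memLatGen_finset_inf Vs hne), IHF]
      set Xf : ι' → Submodule k V := fun s =>
        (Finset.univ.filter (fun i => s ∈ A' i ∧ Vs i ⊓ U = ⊥)).inf Vs with hXf
      have hbmem : ∀ s : ι', ∃ y : V, y ∈ Xf s ∧ π y = b' s := by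
        intro s
        have hmm : b' s ∈ Submodule.map π (Xf s) := by
          rw [hXf, hmapFinf, Submodule.mem_finsetInf]
          intro i hi
          rw [Finset.mem_filter] at hi
          rw [show Submodule.map π (Vs i) = Vs' i from rfl, hA' i]
          exact Submodule.subset_span (Set.mem_image_of_mem _ hi.2.1)
        obtain ⟨y, hy, hye⟩ := Submodule.mem_map.1 hmm
        exact ⟨y, hy, hye⟩
      choose x hx1 hx2 using hbmem
      have hxV : ∀ i, ∀ s ∈ A' i, x s ∈ Vs i := by
        intro i s hs
        rcases hdich i with hbot | hle
        · have hiF : i ∈ Finset.univ.filter (fun j => s ∈ A' j ∧ Vs j ⊓ U = ⊥) :=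
            Finset.mem_filter.2 ⟨Finset.mem_univ i, hs, hbot⟩
          exact Finset.inf_le (f := Vs) hiF (hx1 s)
        · have h1 : π (x s) ∈ Submodule.map π (Vs i) := by
            rw [show Submodule.map π (Vs i) = Vs' i from rfl, hA' i, hx2 s]
            exact Submodule.subset_span (Set.mem_image_of_mem _ hs)
          have h2 : x s ∈ Submodule.comap π (Submodule.map π (Vs i)) := h1
          rw [Submodule.comap_map_eq, hπ, Submodule.ker_mkQ, sup_eq_left.2 hle] at h2
          exact h2
      let u : Module.Basis (Fin (Module.finrank k ↥U)) k ↥U := Module.finBasis k ↥U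
      set vfun : (Fin (Module.finrank k ↥U)) ⊕ ι' → V :=
        Sum.elim (fun j => ((u j : V))) x with hvfun
      have hUspan : Submodule.span k (Set.range (fun j => ((u j : V)))) = U := by
        have h1 : Set.range (fun j => ((u j : V))) = U.subtype '' Set.range u := by
          rw [← Set.range_comp]; rfl
        rw [h1, ← Submodule.map_span, u.span_eq, Submodule.map_top, Submodule.range_subtype]
      have hliu : LinearIndependent k (fun j => ((u j : V))) :=
        u.linearIndependent.map' U.subtype U.ker_subtype
      have hπx : π ∘ x = ⇑b' := funext hx2
      have hlix : LinearIndependent k x :=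
        LinearIndependent.of_comp π (hπx ▸ b'.linearIndependent)
      have hdisj : Disjoint (span k (Set.range (fun j => ((u j : V)))))
          (span k (Set.range x)) := by
        have h1 : Disjoint (span k (Set.range x)) (LinearMap.ker π) :=
          Submodule.range_ker_disjoint (hπx ▸ b'.linearIndependent)
        rw [hπ, Submodule.ker_mkQ] at h1
        rw [hUspan]
        exact h1.symm
      have hli : LinearIndependent k vfun := by
        rw [hvfun, linearIndependent_sum]
        exact ⟨hliu, hlix, by rw [Sum.elim_comp_inl, Sum.elim_comp_inr]; exact hdisj⟩
      have hspan : ⊤ ≤ span k (Set.range vfun) := by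
        set T := span k (Set.range vfun) with hT
        have hUT : U ≤ T := by
          rw [← hUspan]
          apply Submodule.span_mono
          rintro _ ⟨j, rfl⟩; exact ⟨Sum.inl j, rfl⟩
        have hmapT : Submodule.map π T = ⊤ := by
          rw [hT, Submodule.map_span, eq_top_iff, ← b'.span_eq]
          apply Submodule.span_mono
          rintro _ ⟨s, rfl⟩
          exact ⟨x s, ⟨Sum.inr s, rfl⟩, hx2 s⟩
        intro v _
        have hv : π v ∈ Submodule.map π T := by rw [hmapT]; trivial
        obtain ⟨t, ht, hte⟩ := Submodule.mem_map.1 hv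
        have hvt : v - t ∈ U := by
          rw [← Submodule.ker_mkQ U, LinearMap.mem_ker, map_sub]
          rw [hπ] at hte
          rw [hte, sub_self]
        have := Submodule.add_mem T (hUT hvt) ht
        simpa using this
      set bV : Module.Basis _ k V := Module.Basis.mk hli hspan with hbV
      refine ⟨_ ⊕ ι', bV, fun i =>
        (Sum.inr '' A' i) ∪ (if U ≤ Vs i then Set.range Sum.inl else ∅), fun i => ?_⟩
      have hb : ⇑bV = vfun := Module.Basis.coe_mk hli hspan
      rw [hb]
      have hximg : vfun '' (Sum.inr '' A' i) = x '' A' i := by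
        rw [Set.image_image]; rfl
      apply le_antisymm
      · intro v hv
        have h1 : π v ∈ span k (⇑b' '' A' i) := by
          rw [← hA' i]; exact ⟨v, hv, rfl⟩
        have h2 : ⇑b' '' A' i = π '' (x '' A' i) := by
          rw [Set.image_image]
          exact Set.image_congr fun s _ => (hx2 s).symm
        rw [h2, ← Submodule.map_span] at h1
        obtain ⟨w, hw, hwe⟩ := Submodule.mem_map.1 h1
        have hwVs : w ∈ Vs i := by
          refine Submodule.span_le.2 ?_ hw
          rintro _ ⟨s, hs, rfl⟩; exact hxV i s hs
        have hwspan : w ∈ span k (vfun '' ((Sum.inr '' A' i) ∪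
            (if U ≤ Vs i then Set.range Sum.inl else ∅))) := by
          refine Submodule.span_mono ?_ (hximg ▸ hw)
          exact Set.image_mono (Set.subset_union_left)
        have hvw : v - w ∈ U := by
          rw [← Submodule.ker_mkQ U, LinearMap.mem_ker, map_sub]
          rw [hπ] at hwe
          rw [hwe, sub_self]
        rcases hdich i with hbot | hle
        · have hmem : v - w ∈ Vs i ⊓ U := ⟨Submodule.sub_mem _ hv hwVs, hvw⟩
          rw [hbot, Submodule.mem_bot, sub_eq_zero] at hmem
          exact hmem ▸ hwspan
        · have hUspan2 : U ≤ span k (vfun '' ((Sum.inr '' A' i) ∪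
              (if U ≤ Vs i then Set.range Sum.inl else ∅))) := by
            refine le_trans (le_of_eq hUspan.symm) (Submodule.span_mono ?_)
            rintro _ ⟨j, rfl⟩
            refine ⟨Sum.inl j, ?_, rfl⟩
            rw [if_pos hle]
            exact Set.mem_union_right _ ⟨j, rfl⟩
          have hadd := Submodule.add_mem _ hwspan (hUspan2 hvw)
          rwa [add_sub_cancel] at hadd
      · rw [Submodule.span_le]
        rintro _ ⟨t, ht, rfl⟩
        rcases ht with ⟨s, hs, rfl⟩ | hmem
        · exact hxV i s hs
        · by_cases hle : U ≤ Vs i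
          · rw [if_pos hle] at hmem
            obtain ⟨j, rfl⟩ := hmem
            exact hle (u j).2
          · rw [if_neg hle] at hmem
            exact absurd hmem (Set.notMem_empty t)
end Adapted

/-- If `V₁, …, Vₙ ⊆ V` and `V'₁, …, V'ₙ ⊆ V'` each generate distributive lattices, then
`V₁ ⊗ V'₁, …, Vₙ ⊗ V'ₙ ⊆ V ⊗ V'` generate a distributive lattice. -/
theorem tensor_distributive_of_distributive
    {k V W : Type*} [Field k] [AddCommGroup V] [Module k V] [FiniteDimensional k V]
    [AddCommGroup W] [Module k W] [FiniteDimensional k W]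
    (n : ℕ) (Vs : Fin n → Submodule k V) (Ws : Fin n → Submodule k W)
    (hV : IsDistribFamily (Set.range Vs)) (hW : IsDistribFamily (Set.range Ws)) :
    IsDistribFamily (Set.range fun i : Fin n => tensorSub (Vs i) (Ws i)) := by
  obtain ⟨ι, b, A, hA⟩ := exists_adapted_aux (Module.finrank k V) le_rfl n Vs hV
  obtain ⟨κ, c, B, hB⟩ := exists_adapted_aux (Module.finrank k W) le_rfl n Ws hW
  apply distrib_of_spans (b.tensorProduct c)
  rintro _ ⟨i, rfl⟩
  exact ⟨A i ×ˢ B i, by show tensorSub (Vs i) (Ws i) = _; rw [hA i, hB i, tensorSub_span]⟩
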